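/- The equal-split utility vector u with u_i = f*(β) for all i ∈ {1,…,N} is in the core of the coalitional game v, i.e., ∑_{i=1}^N u_i = N·f*(β) = v({1,…,N}) and ∑_{i∈S} u_i = |S|·f*(β) ≥ |S|·f*(β̃(|S|)) = v(S) for every nonempty S ⊆ {1,…,N}. Moreover, this utility vector is attained at the symmetric Pareto efficient allocation x_i = y_i = z_{ji} = x̂_β/N for all j ≠ i and all i, i.e., at that allocation v_i(x, y, Z) = f(x_i + d_i) − κ·x_i − δ·d_i − σ·u_i equals f*(β) for every i. -/

import Mathlib

open Filter Finset

/-- The benefit function `f` with its first and second derivatives, together with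
the maximizer map `α ↦ x̂_α` (the unique `x ≥ 0` with `f'(x̂_α) = α` for `α ∈ (0, f'(0)]`). -/
structure BenefitFun where
  f : ℝ → ℝ
  f' : ℝ → ℝ
  f'' : ℝ → ℝ
  xhat : ℝ → ℝ
  f_zero : f 0 = 0
  f_nonneg : ∀ x : ℝ, 0 ≤ x → 0 ≤ f x
  hasDeriv : ∀ x ∈ Set.Ici (0:ℝ), HasDerivWithinAt f (f' x) (Set.Ici 0) x
  hasDeriv' : ∀ x ∈ Set.Ici (0:ℝ), HasDerivWithinAt f' (f'' x) (Set.Ici 0) x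
  cont_f'' : ContinuousOn f'' (Set.Ici 0)
  f'_pos : ∀ x : ℝ, 0 < x → 0 < f' x
  f''_neg : ∀ x : ℝ, 0 < x → f'' x < 0
  f'_tendsto : Filter.Tendsto f' Filter.atTop (nhds 0)
  xhat_nonneg : ∀ α : ℝ, 0 < α → α ≤ f' 0 → 0 ≤ xhat α
  xhat_spec : ∀ α : ℝ, 0 < α → α ≤ f' 0 → f' (xhat α) = α
  xhat_unique : ∀ α : ℝ, 0 < α → α ≤ f' 0 → ∀ x : ℝ, 0 ≤ x → f' x = α → x = xhat α
  xhat_max : ∀ α : ℝ, 0 < α → α ≤ f' 0 → ∀ x : ℝ, 0 ≤ x → f x - α * x ≤ f (xhat α) - α * xhat α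

/-- `f*(α) = f(x̂_α) − α·x̂_α = sup_{x ≥ 0} (f(x) − α x)`. -/
noncomputable def BenefitFun.fstar (B : BenefitFun) (α : ℝ) : ℝ :=
  B.f (B.xhat α) - α * B.xhat α

/-- `β̃(n) = (1/n)·κ + ((n−1)/n)·(δ+σ)`. -/
noncomputable def btilde (κ δ σ : ℝ) (n : ℕ) : ℝ :=
  (1 / (n:ℝ)) * κ + (((n:ℝ) - 1) / (n:ℝ)) * (δ + σ)

/-- Peer `i`'s utility `vᵢ(x, y, Z) = f(xᵢ + dᵢ) − κ xᵢ − δ dᵢ − σ uᵢ`,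
where `dᵢ = ∑ⱼ z_{ij}` and `uᵢ = ∑ⱼ z_{ji}`. -/
noncomputable def util (B : BenefitFun) (κ δ σ : ℝ) {N : ℕ} (x : Fin N → ℝ)
    (Z : Fin N → Fin N → ℝ) (i : Fin N) : ℝ :=
  B.f (x i + ∑ j, Z i j) - κ * x i - δ * (∑ j, Z i j) - σ * (∑ j, Z j i)

/-- The coalitional game `v(S) = |S|·f*(β̃(|S|))` (so `v(∅) = 0`). -/
noncomputable def vgame (B : BenefitFun) (κ δ σ : ℝ) {N : ℕ} (S : Finset (Fin N)) : ℝ :=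
  (S.card : ℝ) * B.fstar (btilde κ δ σ S.card)

lemma btilde_eq (κ δ σ : ℝ) (n : ℕ) (hn : 1 ≤ n) :
    btilde κ δ σ n = (δ + σ) + (κ - (δ + σ)) / n := by
  have h : (n:ℝ) ≠ 0 := by positivity
  unfold btilde; field_simp; ring

lemma fstar_anti (B : BenefitFun) (a b : ℝ) (ha : 0 < a) (hab : a ≤ b)
    (hbf : b ≤ B.f' 0) : B.fstar b ≤ B.fstar a := by
  have hb : 0 < b := lt_of_lt_of_le ha hab
  have hx : 0 ≤ B.xhat b := B.xhat_nonneg b hb hbf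
  have h1 := B.xhat_max a ha (hab.trans hbf) (B.xhat b) hx
  have h2 : B.f (B.xhat b) - b * B.xhat b ≤ B.f (B.xhat b) - a * B.xhat b := by
    nlinarith
  exact h2.trans h1

theorem stmt7 (B : BenefitFun) (N : ℕ) (hN : 2 ≤ N)
    (κ δ σ : ℝ) (hκ : 0 < κ) (hδ : 0 < δ) (hσ : 0 < σ)
    (hcost : δ + σ < κ) (hκf : κ < B.f' 0)
    (β : ℝ) (hβ : β = (1 / (N:ℝ)) * κ + (((N:ℝ) - 1) / (N:ℝ)) * (δ + σ)) :
    ((∑ _i : Fin N, B.fstar β) = (N:ℝ) * B.fstar β)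
    ∧ (N:ℝ) * B.fstar β = vgame B κ δ σ (Finset.univ : Finset (Fin N))
    ∧ (∀ S : Finset (Fin N), S.Nonempty →
        (∑ _i ∈ S, B.fstar β) = (S.card : ℝ) * B.fstar β
        ∧ vgame B κ δ σ S ≤ (S.card : ℝ) * B.fstar β)
    ∧ (∀ i : Fin N,
        util B κ δ σ (fun _ => B.xhat β / (N:ℝ))
          (fun j k => if j = k then 0 else B.xhat β / (N:ℝ)) i = B.fstar β) := by
  have hN1 : 1 ≤ N := le_trans (by norm_num) hN
  have hNpos : (0:ℝ) < (N:ℝ) := by exact_mod_cast Nat.pos_of_ne_zero (by omega)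
  have hNne : (N:ℝ) ≠ 0 := ne_of_gt hNpos
  have hβeq : β = btilde κ δ σ N := by rw [hβ]; rfl
  have hβeq' : β = (δ + σ) + (κ - (δ + σ)) / N := by
    rw [hβeq, btilde_eq κ δ σ N hN1]
  have hβpos : 0 < β := by
    rw [hβeq']
    have : 0 < (κ - (δ + σ)) / N := by
      apply div_pos; linarith; exact hNpos
    linarith
  have hβleκ : β ≤ κ := by
    rw [hβeq']
    have h1 : (κ - (δ + σ)) / N ≤ (κ - (δ + σ)) / 1 := by
      apply div_le_div_of_nonneg_left (by linarith) (by norm_num)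
      exact_mod_cast hN1
    simp at h1
    linarith
  have hβf : β ≤ B.f' 0 := le_of_lt (lt_of_le_of_lt hβleκ hκf)
  refine ⟨by simp, ?_, ?_, ?_⟩
  · unfold vgame
    rw [Finset.card_univ, Fintype.card_fin, ← hβeq]
  · intro S hS
    have hScard : 1 ≤ S.card := Finset.card_pos.mpr hS
    have hScN : S.card ≤ N := le_trans (Finset.card_le_univ S) (by simp)
    have hScpos : (0:ℝ) < (S.card:ℝ) := by exact_mod_cast hScard
    constructor
    · simp [mul_comm]
    · unfold vgame
      have hbt : btilde κ δ σ S.card = (δ + σ) + (κ - (δ + σ)) / S.card :=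
        btilde_eq κ δ σ S.card hScard
      have hβle : β ≤ btilde κ δ σ S.card := by
        rw [hβeq', hbt]
        have : (κ - (δ + σ)) / N ≤ (κ - (δ + σ)) / S.card := by
          apply div_le_div_of_nonneg_left (by linarith) hScpos
          exact_mod_cast hScN
        linarith
      have hbtf : btilde κ δ σ S.card ≤ B.f' 0 := by
        rw [hbt]
        have h1 : (κ - (δ + σ)) / S.card ≤ (κ - (δ + σ)) / 1 := by
          apply div_le_div_of_nonneg_left (by linarith) (by norm_num)
          exact_mod_cast hScard
        simp at h1
        linarith
      have := fstar_anti B β (btilde κ δ σ S.card) hβpos hβle hbtf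
      exact mul_le_mul_of_nonneg_left this (le_of_lt hScpos)
  · intro i
    unfold util
    set X := B.xhat β with hX
    set c := X / (N:ℝ) with hc
    have hrow : (∑ j, if i = j then (0:ℝ) else c) = (N:ℝ) * c - c := by
      have h1 : (∑ j : Fin N, ((if i = j then (0:ℝ) else c) + (if i = j then c else 0)))
          = ∑ j : Fin N, c := by
        apply Finset.sum_congr rfl
        intro j _
        by_cases h : i = j <;> simp [h]
      have h2 : (∑ j : Fin N, if i = j then c else (0:ℝ)) = c := by
        simp
      rw [Finset.sum_add_distrib, h2] at h1
      have h3 : (∑ _j : Fin N, c) = (N:ℝ) * c := by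
        simp [mul_comm]
      rw [h3] at h1
      linarith
    have hcol : (∑ j, if j = i then (0:ℝ) else c) = (N:ℝ) * c - c := by
      rw [← hrow]
      apply Finset.sum_congr rfl
      intro j _
      by_cases h : i = j <;> simp [h, eq_comm]
    simp only [hrow, hcol]
    have harg : c + ((N:ℝ) * c - c) = X := by
      rw [hc]; field_simp; ring
    rw [harg]
    unfold BenefitFun.fstar
    have hβc : κ * c + δ * ((N:ℝ) * c - c) + σ * ((N:ℝ) * c - c) = β * X := by
      rw [hc, hβ]; field_simp; ring
    linarith
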